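/- Let m ≤ n and let z, z' be m×n complex matrices satisfying z·zᴴ = 1 and z'·z'ᴴ = 1. If A is an m×m complex matrix with z' = A·z, then A is unitary: A·Aᴴ = 1 and Aᴴ·A = 1. Hence each GL(m,ℂ)-orbit intersects the constraint surface C = {w : w·wᴴ = 1} in at most one U(m)-orbit. -/
import Mathlib

open Matrix

/-- Each `GL(m,ℂ)`-orbit meets the constraint surface `C = {w : w·wᴴ = 1}` in at
most one `U(m)`-orbit: if `z, z' ∈ C` and `z' = A·z`, then `A` is unitary. -/
theorem stmt16 (m n : ℕ) (hmn : m ≤ n) (z z' : Matrix (Fin m) (Fin n) ℂ)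
    (hz : z * zᴴ = 1) (hz' : z' * z'ᴴ = 1)
    (A : Matrix (Fin m) (Fin m) ℂ) (hA : z' = A * z) :
    A * Aᴴ = 1 ∧ Aᴴ * A = 1 := by
  have h1 : A * Aᴴ = 1 := by
    calc A * Aᴴ = A * (z * zᴴ) * Aᴴ := by rw [hz, mul_one]
    _ = (A * z) * (A * z)ᴴ := by simp [conjTranspose_mul, Matrix.mul_assoc]
    _ = 1 := by rw [← hA, hz']
  exact ⟨h1, mul_eq_one_comm.mp h1⟩
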